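/- arXiv:1609.08937 — 2 statements merged into one kernel-verified Lean document; each statement's English description precedes it below -/
import Mathlib

section
/- Let A, B, B', C, C' be complex-valued multiplicative characters of a finite field F_q with q elements, let x, y ∈ F_q with y ≠ 1, and let t ∈ F_q with t ≠ 1. Then (1/(q-1))·Σ_θ {B'C̄'θ choose θ}·F₂(A;B,B'θ;C,C';x,y)·θ(t) = ε(t)·B̄'(1-t)·F₂(A;B,B';C,C'; x, y/(1-t)) - (B̄'C')(-t)·ε(y)·Ā(1-y)·₂F₁(A,B;C | x/(1-y)), where the sum on the left runs over all multiplicative characters θ of F_q. -/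
open Finset

noncomputable instance {F : Type*} [Field F] [Fintype F] : Fintype (MulChar F ℂ) :=
  Fintype.ofFinite _

/-- Finite-field binomial coefficient `{A choose B} = B(-1) · J(A, B̄)`,
where `J(χ,λ) = ∑_u χ(u)·λ(1-u)` is the Jacobi sum. -/
noncomputable def binom {F : Type*} [Field F] [Fintype F] (A B : MulChar F ℂ) : ℂ :=
  B (-1) * ∑ u : F, A u * B⁻¹ (1 - u)

/-- Finite-field Gauss hypergeometric series
`₂F₁(A,B;C|x) = ε(x)·(BC)(-1)·∑_y B(y)·(B̄C)(1-y)·Ā(1-xy)`. -/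
noncomputable def gauss2F1 {F : Type*} [Field F] [Fintype F]
    (A B C : MulChar F ℂ) (x : F) : ℂ :=
  (1 : MulChar F ℂ) x * (B * C) (-1) *
    ∑ y : F, B y * (B⁻¹ * C) (1 - y) * A⁻¹ (1 - x * y)

/-- Finite-field `₃F₂` hypergeometric series. -/
noncomputable def hyper3F2 {F : Type*} [Field F] [Fintype F]
    (A₀ A₁ A₂ B₁ B₂ : MulChar F ℂ) (x : F) : ℂ :=
  ((Fintype.card F : ℂ) - 1)⁻¹ *
    ∑ χ : MulChar F ℂ,
      binom (A₀ * χ) χ * binom (A₁ * χ) (B₁ * χ) * binom (A₂ * χ) (B₂ * χ) * χ x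

/-- Finite-field Appell series
`F₂(A;B,B';C,C';x,y) = ε(xy)·(BB'CC')(-1)·∑_{u,v} B(u)B'(v)(B̄C)(1-u)(B̄'C')(1-v)·Ā(1-ux-vy)`. -/
noncomputable def appellF2 {F : Type*} [Field F] [Fintype F]
    (A B B' C C' : MulChar F ℂ) (x y : F) : ℂ :=
  (1 : MulChar F ℂ) (x * y) * (B * B' * C * C') (-1) *
    ∑ u : F, ∑ v : F,
      B u * B' v * (B⁻¹ * C) (1 - u) * (B'⁻¹ * C') (1 - v) * A⁻¹ (1 - u * x - v * y)

open scoped Classical in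
/-- `δ(x) = 1` if `x = 0`, and `0` otherwise. -/
noncomputable def deltaF {F : Type*} [Field F] (x : F) : ℂ :=
  if x = 0 then 1 else 0

open scoped Classical in
/-- `δ(χ) = 1` if `χ = ε` (the trivial character), and `0` otherwise. -/
noncomputable def deltaChar {F : Type*} [Field F] [Fintype F] (χ : MulChar F ℂ) : ℂ :=
  if χ = 1 then 1 else 0

set_option linter.unusedSectionVars false
set_option maxHeartbeats 1000000

section Aux

variable {F : Type*} [Field F] [Fintype F]

lemma sum_chars_ne {a : F} (ha : a ≠ 1) : ∑ χ : MulChar F ℂ, χ a = 0 := by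
  obtain ⟨χ, hχ⟩ := MulChar.exists_apply_ne_one_of_hasEnoughRootsOfUnity F ℂ ha
  refine eq_zero_of_mul_eq_self_left hχ ?_
  simp only [Finset.mul_sum, ← MulChar.mul_apply]
  exact Fintype.sum_bijective _ (Group.mulLeft_bijective χ) _ _ fun χ' ↦ rfl

open scoped Classical in
lemma ortho0 : True := trivial
lemma card_chars : (Fintype.card (MulChar F ℂ) : ℂ) = (Fintype.card F : ℂ) - 1 := by
  have h := MulChar.card_eq_card_units_of_hasEnoughRootsOfUnity F ℂ
  rw [Nat.card_eq_fintype_card, Nat.card_units, Nat.card_eq_fintype_card] at h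
  have h1 : 1 ≤ Fintype.card F := Fintype.card_pos
  rw [h]
  push_cast [Nat.cast_sub h1]
  ring

open scoped Classical in
lemma ortho (a : F) :
    ((Fintype.card F : ℂ) - 1)⁻¹ * ∑ χ : MulChar F ℂ, χ a = if a = 1 then 1 else 0 := by
  split_ifs with h
  · subst h
    simp only [MulChar.map_one, Finset.sum_const, Finset.card_univ, nsmul_eq_mul, mul_one]
    rw [card_chars, inv_mul_cancel₀]
    have h2 : (2:ℕ) ≤ Fintype.card F := Fintype.one_lt_card
    have : ((Fintype.card F : ℂ)) ≠ 1 := by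
      intro hc
      have h3 : ((Fintype.card F : ℕ) : ℂ) = ((1:ℕ) : ℂ) := by push_cast; exact hc
      have := Nat.cast_injective (R := ℂ) h3
      omega
    intro hc
    exact this (sub_eq_zero.mp hc)
  · rw [sum_chars_ne h, mul_zero]

lemma chi_map_inv (χ : MulChar F ℂ) (a : F) : χ a⁻¹ = (χ a)⁻¹ := by
  rw [← MulChar.inv_apply', MulChar.inv_apply_eq_inv']

lemma chi_ne_zero (χ : MulChar F ℂ) {a : F} (ha : a ≠ 0) : χ a ≠ 0 := by
  intro h
  have : χ a * χ a⁻¹ = 1 := by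
    rw [← map_mul, mul_inv_cancel₀ ha, MulChar.map_one]
  rw [h, zero_mul] at this
  exact zero_ne_one this

lemma chi_neg_one_sq (χ : MulChar F ℂ) : χ (-1) * χ (-1) = 1 := by
  rw [← map_mul, neg_mul_neg, one_mul, MulChar.map_one]

open scoped Classical in
lemma eps_apply (a : F) : (1 : MulChar F ℂ) a = if a = 0 then 0 else 1 := by
  split_ifs with h
  · rw [h, MulChar.map_zero]
  · exact MulChar.one_apply (isUnit_iff_ne_zero.mpr h)

-- the θ-free summand
noncomputable def gg (A B B' C C' : MulChar F ℂ) (x y : F) (s u v : F) : ℂ :=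
  (1 : MulChar F ℂ) (x * y) * (B * B' * C * C') (-1) * (B' * C'⁻¹) s *
    (B u * B' v * (B⁻¹ * C) (1 - u) * (B'⁻¹ * C') (1 - v) * A⁻¹ (1 - u * x - v * y))

lemma lemF (A B B' C C' θ : MulChar F ℂ) (x y t : F) :
    binom (B' * C'⁻¹ * θ) θ * appellF2 A B (B' * θ) C C' x y * θ t =
      ∑ u : F, ∑ v : F, ∑ s : F,
        gg A B B' C C' x y s u v * θ (s * v * t * (1 - s)⁻¹ * (1 - v)⁻¹) := by
  rw [binom, appellF2]
  simp only [Finset.mul_sum, Finset.sum_mul]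
  refine Finset.sum_congr rfl fun u _ ↦ Finset.sum_congr rfl fun v _ ↦
    Finset.sum_congr rfl fun s _ ↦ ?_
  rw [← one_mul (gg A B B' C C' x y s u v * θ _), ← chi_neg_one_sq θ]
  simp only [gg, MulChar.mul_apply, MulChar.inv_apply', map_mul, chi_map_inv, mul_inv]
  ring

open scoped Classical in
lemma lemLHS (A B B' C C' : MulChar F ℂ) (x y t : F) :
    ((Fintype.card F : ℂ) - 1)⁻¹ * ∑ θ : MulChar F ℂ,
        binom (B' * C'⁻¹ * θ) θ * appellF2 A B (B' * θ) C C' x y * θ t =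
      ∑ u : F, ∑ v : F, ∑ s : F, gg A B B' C C' x y s u v *
        (if s * v * t * (1 - s)⁻¹ * (1 - v)⁻¹ = 1 then 1 else 0) := by
  have h1 : (∑ θ : MulChar F ℂ,
        binom (B' * C'⁻¹ * θ) θ * appellF2 A B (B' * θ) C C' x y * θ t) =
      ∑ u : F, ∑ v : F, ∑ s : F, gg A B B' C C' x y s u v *
        ∑ θ : MulChar F ℂ, θ (s * v * t * (1 - s)⁻¹ * (1 - v)⁻¹) := by
    rw [Finset.sum_congr rfl fun θ _ ↦ lemF A B B' C C' θ x y t, Finset.sum_comm]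
    refine Finset.sum_congr rfl fun u _ ↦ ?_
    rw [Finset.sum_comm]
    refine Finset.sum_congr rfl fun v _ ↦ ?_
    rw [Finset.sum_comm]
    refine Finset.sum_congr rfl fun s _ ↦ ?_
    rw [← Finset.mul_sum]
  rw [h1]
  simp only [Finset.mul_sum]
  refine Finset.sum_congr rfl fun u _ ↦ Finset.sum_congr rfl fun v _ ↦
    Finset.sum_congr rfl fun s _ ↦ ?_
  rw [← Finset.mul_sum, ← Finset.mul_sum, mul_left_comm, ortho]

open scoped Classical in
lemma lemS (B' C' : MulChar F ℂ) {t : F} (ht : t ≠ 0) (v : F) :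
    B' v * (B'⁻¹ * C') (1 - v) * ∑ s : F, (B' * C'⁻¹) s *
        (if s * v * t * (1 - s)⁻¹ * (1 - v)⁻¹ = 1 then 1 else 0) =
      B' v * (if v = 1 then 0 else (B'⁻¹ * C') (1 - v + v * t)) := by
  by_cases hv0 : v = 0
  · subst hv0; simp [MulChar.map_zero]
  by_cases hv1 : v = 1
  · subst hv1; simp [MulChar.map_zero]
  have h1v : (1 : F) - v ≠ 0 := sub_ne_zero_of_ne (Ne.symm hv1)
  rw [if_neg hv1]
  set w : F := 1 - v + v * t with hwdef
  have key : ∀ s : F, s * v * t * (1 - s)⁻¹ * (1 - v)⁻¹ = 1 → w ≠ 0 ∧ s = (1 - v) / w := by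
    intro s hc
    have h1s : (1 : F) - s ≠ 0 := by
      intro h; rw [h, inv_zero, mul_zero, zero_mul] at hc; exact one_ne_zero hc.symm
    field_simp [h1s, h1v] at hc
    have hsw : s * w = 1 - v := by rw [hwdef]; first | linear_combination hc | linear_combination -hc
    have hw0 : w ≠ 0 := by intro hw0; rw [hw0, mul_zero] at hsw; exact h1v hsw.symm
    exact ⟨hw0, (eq_div_iff hw0).mpr hsw⟩
  by_cases hw : w = 0
  · rw [show (B'⁻¹ * C') w = 0 from by rw [hw, MulChar.map_zero], mul_zero]
    have hz : ∀ s : F, (B' * C'⁻¹) s *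
        (if s * v * t * (1 - s)⁻¹ * (1 - v)⁻¹ = 1 then (1:ℂ) else 0) = 0 := by
      intro s
      rw [if_neg fun hc ↦ (key s hc).1 hw, mul_zero]
    rw [Finset.sum_congr rfl fun s _ ↦ hz s, Finset.sum_const, smul_zero, mul_zero]
  · have hcond : (1 - v) / w * v * t * (1 - (1 - v) / w)⁻¹ * (1 - v)⁻¹ = 1 := by
      have h2 : 1 - (1 - v) / w = v * t / w := by
        rw [eq_div_iff hw, sub_mul, div_mul_cancel₀ _ hw, hwdef]; ring
      rw [h2]
      field_simp
    rw [Finset.sum_eq_single_of_mem ((1 - v) / w) (Finset.mem_univ _)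
      (fun s _ hs ↦ by rw [if_neg fun hc ↦ hs (key s hc).2, mul_zero]),
      if_pos hcond, mul_one]
    have hb1 : B' (1 - v) ≠ 0 := chi_ne_zero B' h1v
    have hc1 : C' (1 - v) ≠ 0 := chi_ne_zero C' h1v
    have hbw : B' w ≠ 0 := chi_ne_zero B' hw
    have hcw : C' w ≠ 0 := chi_ne_zero C' hw
    rw [div_eq_mul_inv]
    simp only [MulChar.mul_apply, MulChar.inv_apply_eq_inv', map_mul, chi_map_inv]
    field_simp

lemma chi_inv_neg_one (χ : MulChar F ℂ) : χ⁻¹ (-1) = χ (-1) := by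
  rw [MulChar.inv_apply_eq_inv']
  exact inv_eq_of_mul_eq_one_right (chi_neg_one_sq χ)

open scoped Classical in
/-- the common middle expression -/
noncomputable def EE (A B B' C C' : MulChar F ℂ) (x y t : F) : ℂ :=
  ∑ u : F, ∑ v : F,
    (1 : MulChar F ℂ) (x * y) * (B * B' * C * C') (-1) * B u * (B⁻¹ * C) (1 - u) *
      A⁻¹ (1 - u * x - v * y) * (B' v * (if v = 1 then 0 else (B'⁻¹ * C') (1 - v + v * t)))

open scoped Classical in
lemma lemLHS2 (A B B' C C' : MulChar F ℂ) (x y : F) {t : F} (ht : t ≠ 0) :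
    (∑ u : F, ∑ v : F, ∑ s : F, gg A B B' C C' x y s u v *
        (if s * v * t * (1 - s)⁻¹ * (1 - v)⁻¹ = 1 then 1 else 0)) =
      EE A B B' C C' x y t := by
  rw [EE]
  refine Finset.sum_congr rfl fun u _ ↦ Finset.sum_congr rfl fun v _ ↦ ?_
  have h1 : (∑ s : F, gg A B B' C C' x y s u v *
        (if s * v * t * (1 - s)⁻¹ * (1 - v)⁻¹ = 1 then 1 else 0)) =
      ((1 : MulChar F ℂ) (x * y) * (B * B' * C * C') (-1) * B u * (B⁻¹ * C) (1 - u) *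
        A⁻¹ (1 - u * x - v * y)) *
        (B' v * (B'⁻¹ * C') (1 - v) * ∑ s : F, (B' * C'⁻¹) s *
          (if s * v * t * (1 - s)⁻¹ * (1 - v)⁻¹ = 1 then 1 else 0)) := by
    simp only [Finset.mul_sum]
    refine Finset.sum_congr rfl fun s _ ↦ ?_
    rw [gg]; ring
  rw [h1, lemS B' C' ht v, mul_assoc]

lemma lemT1 (A B B' C C' : MulChar F ℂ) (x y : F) {t : F} (ht : t ≠ 0)
    (h1t : (1 : F) - t ≠ 0) :
    (1 : MulChar F ℂ) t * B'⁻¹ (1 - t) * appellF2 A B B' C C' x (y / (1 - t)) =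
      ∑ u : F, ∑ v : F,
        (1 : MulChar F ℂ) (x * y) * (B * B' * C * C') (-1) * B u * (B⁻¹ * C) (1 - u) *
          A⁻¹ (1 - u * x - v * y) * (B' v * (B'⁻¹ * C') (1 - v + v * t)) := by
  rw [appellF2]
  have hε : (1 : MulChar F ℂ) (x * (y / (1 - t))) = (1 : MulChar F ℂ) (x * y) := by
    rw [eps_apply, eps_apply]
    have h : (x * (y / (1 - t)) = 0) = (x * y = 0) := by
      rw [eq_iff_iff, mul_eq_zero, mul_eq_zero, div_eq_zero_iff]
      simp [h1t]
    rw [h]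
  rw [hε]
  simp only [Finset.mul_sum]
  refine Finset.sum_congr rfl fun u _ ↦ ?_
  refine (Fintype.sum_equiv (Equiv.mulRight₀ (1 - t) h1t) _ _ fun v ↦ ?_).symm
  simp only [Equiv.mulRight₀_apply]
  have harg : (1 : F) - u * x - v * (1 - t) * (y / (1 - t)) = 1 - u * x - v * y := by
    field_simp
  rw [MulChar.one_apply (isUnit_iff_ne_zero.mpr ht),
    show (1 : F) - v * (1 - t) = 1 - v + v * t from by ring, harg,
    map_mul B' v (1 - t), MulChar.inv_apply_eq_inv' B' (1 - t)]
  have hb := chi_ne_zero B' h1t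
  field_simp

lemma lemT2 (A B B' C C' : MulChar F ℂ) (x t : F) {y : F} (hy : (1 : F) - y ≠ 0) :
    (B'⁻¹ * C') (-t) * (1 : MulChar F ℂ) y * A⁻¹ (1 - y) * gauss2F1 A B C (x / (1 - y)) =
      ∑ u : F,
        (1 : MulChar F ℂ) (x * y) * (B * B' * C * C') (-1) * B u * (B⁻¹ * C) (1 - u) *
          A⁻¹ (1 - u * x - y) * (B'⁻¹ * C') t := by
  rw [gauss2F1]
  simp only [Finset.mul_sum]
  refine Finset.sum_congr rfl fun u _ ↦ ?_
  have hA : A⁻¹ (1 - y) * A⁻¹ (1 - x / (1 - y) * u) = A⁻¹ (1 - u * x - y) := by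
    rw [← map_mul]
    congr 1
    field_simp
    ring
  have hε2 : (1 : MulChar F ℂ) y * (1 : MulChar F ℂ) (x / (1 - y)) =
      (1 : MulChar F ℂ) (x * y) := by
    rw [← map_mul, eps_apply, eps_apply]
    have h : (y * (x / (1 - y)) = 0) = (x * y = 0) := by
      rw [eq_iff_iff, mul_eq_zero, div_eq_zero_iff, mul_eq_zero]
      constructor
      · rintro (h | h | h) <;> tauto
      · rintro (h | h) <;> tauto
    rw [h]
  have hsplit : (B'⁻¹ * C') (-t) = (B' (-1) * C' (-1)) * (B'⁻¹ * C') t := by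
    rw [show (-t : F) = -1 * t from by ring, map_mul]
    congr 1
    rw [MulChar.mul_apply, chi_inv_neg_one]
  calc (B'⁻¹ * C') (-t) * (1 : MulChar F ℂ) y * A⁻¹ (1 - y) *
        ((1 : MulChar F ℂ) (x / (1 - y)) * (B * C) (-1) *
          (B u * (B⁻¹ * C) (1 - u) * A⁻¹ (1 - x / (1 - y) * u)))
      = ((1 : MulChar F ℂ) y * (1 : MulChar F ℂ) (x / (1 - y))) * (B'⁻¹ * C') (-t) *
        (B * C) (-1) * B u * (B⁻¹ * C) (1 - u) *
        (A⁻¹ (1 - y) * A⁻¹ (1 - x / (1 - y) * u)) := by ring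
    _ = _ := by
        rw [hε2, hA, hsplit]
        simp only [MulChar.mul_apply]
        ring


end Aux

/-- a generating function for F₂ in the parameter `B'`. -/
theorem appellF2_generating_Bprime {F : Type*} [Field F] [Fintype F]
    (A B B' C C' : MulChar F ℂ) (x y t : F) (hy : y ≠ 1) (ht : t ≠ 1) :
    ((Fintype.card F : ℂ) - 1)⁻¹ *
        ∑ θ : MulChar F ℂ,
          binom (B' * C'⁻¹ * θ) θ * appellF2 A B (B' * θ) C C' x y * θ t =
      (1 : MulChar F ℂ) t * B'⁻¹ (1 - t) * appellF2 A B B' C C' x (y / (1 - t)) -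
      (B'⁻¹ * C') (-t) * (1 : MulChar F ℂ) y * A⁻¹ (1 - y) *
        gauss2F1 A B C (x / (1 - y)) := by
  classical
  by_cases ht0 : t = 0
  · subst ht0
    simp [MulChar.map_zero]
  · have h1t : (1 : F) - t ≠ 0 := sub_ne_zero_of_ne (Ne.symm ht)
    have h1y : (1 : F) - y ≠ 0 := sub_ne_zero_of_ne (Ne.symm hy)
    rw [lemLHS, lemLHS2 A B B' C C' x y ht0, lemT1 A B B' C C' x y ht0 h1t,
      lemT2 A B B' C C' x t h1y, EE, ← Finset.sum_sub_distrib]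
    refine Finset.sum_congr rfl fun u _ ↦ ?_
    set f : F → ℂ := fun v ↦
      (1 : MulChar F ℂ) (x * y) * (B * B' * C * C') (-1) * B u * (B⁻¹ * C) (1 - u) *
        A⁻¹ (1 - u * x - v * y) * (B' v * (B'⁻¹ * C') (1 - v + v * t)) with hf
    have h2 : ∀ v : F,
        (1 : MulChar F ℂ) (x * y) * (B * B' * C * C') (-1) * B u * (B⁻¹ * C) (1 - u) *
          A⁻¹ (1 - u * x - v * y) *
            (B' v * (if v = 1 then 0 else (B'⁻¹ * C') (1 - v + v * t))) =
        if v = 1 then 0 else f v := by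
      intro v
      split_ifs with h
      · rw [mul_zero, mul_zero]
      · rw [hf]
    have hslice :
        (1 : MulChar F ℂ) (x * y) * (B * B' * C * C') (-1) * B u * (B⁻¹ * C) (1 - u) *
          A⁻¹ (1 - u * x - y) * (B'⁻¹ * C') t = f 1 := by
      simp only [hf, MulChar.map_one, one_mul, sub_self, zero_add]
    rw [Finset.sum_congr rfl fun v _ ↦ h2 v, hslice]
    rw [← Finset.sum_erase (Finset.univ) (f := fun v ↦ if v = 1 then 0 else f v)
      (a := 1) (by simp)]
    rw [Finset.sum_congr rfl fun v hv ↦ if_neg (Finset.mem_erase.mp hv).1,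
      Finset.sum_erase_eq_sub (Finset.mem_univ 1)]
end

section
/- Let A, B', C' be complex-valued multiplicative characters of a finite field F_q with q elements and let x, y ∈ F_q with x ≠ 1. Then Σ_{χ,λ} {Aχ choose χ}·{Aχλ choose Aχ}·{B'λ choose C'λ}·χ(x)·λ(y) = (q-1)²·ε(x)·Ā(1-x)·₂F₁(A,B';C' | y/(1-x)) - (q-1)²·Ā(-x)·C̄'(y)·(B̄'C')(1-y), where the sum runs over all pairs of multiplicative characters χ, λ of F_q. -/
open Finset

section ortho
variable {F : Type*} [Field F] [Fintype F]

instance : HasEnoughRootsOfUnity ℂ (Monoid.exponent Fˣ) := by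
  have : NeZero ((Monoid.exponent Fˣ : ℕ) : ℂ) := by
    refine ⟨Nat.cast_ne_zero.mpr ?_⟩
    exact Monoid.exponent_ne_zero.mpr Monoid.ExponentExists.of_finite
  infer_instance

open scoped Classical in
lemma sum_char_apply (t : F) :
    ∑ χ : MulChar F ℂ, χ t = if t = 1 then ((Fintype.card F : ℂ) - 1) else 0 := by
  split_ifs with ht
  · subst ht
    simp only [map_one, Finset.sum_const, Finset.card_univ, nsmul_eq_mul, mul_one]
    have h1 : Nat.card (MulChar F ℂ) = Nat.card Fˣ :=
      MulChar.card_eq_card_units_of_hasEnoughRootsOfUnity F ℂ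
    rw [← Nat.card_eq_fintype_card, h1, Nat.card_eq_fintype_card, Fintype.card_units,
      Nat.cast_sub Fintype.card_pos, Nat.cast_one]
  · obtain ⟨χ, hχ⟩ := MulChar.exists_apply_ne_one_of_hasEnoughRootsOfUnity F ℂ ht
    refine eq_zero_of_mul_eq_self_left hχ ?_
    simp only [Finset.mul_sum, ← MulChar.mul_apply]
    exact Fintype.sum_bijective _ (Group.mulLeft_bijective χ) _ _ fun χ' ↦ rfl

open scoped Classical in
lemma sumU (D E : MulChar F ℂ) (t : F) :
    ∑ lam : MulChar F ℂ, binom (D * lam) (E * lam) * lam t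
      = ((Fintype.card F : ℂ) - 1) * (E⁻¹ t * (D⁻¹ * E) (1 - t)) := by
  simp only [binom, Finset.mul_sum, Finset.sum_mul]
  rw [Finset.sum_comm]
  have key : ∀ w : F, ∀ lam : MulChar F ℂ,
      (E * lam) (-1) * ((D * lam) w * ((E * lam)⁻¹ (1 - w))) * lam t
        = (E (-1) * (D w * E⁻¹ (1 - w))) * lam ((-1) * (w * ((1 - w)⁻¹ * t))) := by
    intro w lam
    simp only [MulChar.mul_apply, mul_inv, MulChar.inv_apply', map_mul]
    ring
  simp only [key]
  rw [show (∑ w : F, ∑ lam : MulChar F ℂ,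
      (E (-1) * (D w * E⁻¹ (1 - w))) * lam ((-1) * (w * ((1 - w)⁻¹ * t))))
      = ∑ w : F, (E (-1) * (D w * E⁻¹ (1 - w))) *
          ∑ lam : MulChar F ℂ, lam ((-1) * (w * ((1 - w)⁻¹ * t))) from by
    simp [Finset.mul_sum]]
  simp only [sum_char_apply, mul_ite, mul_zero]
  by_cases ht0 : t = 0
  · subst ht0
    simp [MulChar.map_zero]
  by_cases ht1 : t = 1
  · subst ht1
    rw [Finset.sum_eq_zero, show ((1:F) - 1) = 0 by ring, MulChar.map_zero, mul_zero, mul_zero]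
    intro w _
    rw [if_neg]
    intro h
    rcases eq_or_ne (1 - w) 0 with h1 | h1
    · rw [h1] at h; simp at h
    · field_simp at h
      exact one_ne_zero (α := F) (by linear_combination -h)
  · -- main case
    have h1t : (1 : F) - t ≠ 0 := sub_ne_zero.mpr (Ne.symm ht1)
    rw [Finset.sum_eq_single ((1 - t)⁻¹ : F)]
    · rw [if_pos, mul_comm]
      · congr 1
        have hw0 : (1 : F) - (1 - t)⁻¹ = -t * (1 - t)⁻¹ := by
          field_simp
          ring
        have e1 : E⁻¹ (1 - (1 - t)⁻¹) = E (-1) * (E t⁻¹ * E (1 - t)) := by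
          rw [MulChar.inv_apply', hw0, mul_inv, inv_inv, ← map_mul, ← map_mul]
          congr 1
          rw [inv_neg]; ring
        have e2 : E (-1) * E (-1) = 1 := by rw [← map_mul]; norm_num
        rw [e1, MulChar.inv_apply', MulChar.mul_apply, MulChar.inv_apply']
        linear_combination (D (1 - t)⁻¹ * E t⁻¹ * E (1 - t)) * e2
      · have hw0 : (1 : F) - (1 - t)⁻¹ = -t * (1 - t)⁻¹ := by
          field_simp
          ring
        rw [hw0, mul_inv, inv_inv, inv_neg]
        field_simp
    · intro w _ hw
      rw [if_neg]
      intro h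
      apply hw
      rcases eq_or_ne (1 - w) 0 with h1 | h1
      · rw [h1] at h; simp at h
      · field_simp at h
        exact eq_inv_of_mul_eq_one_left (by linear_combination h)
    · intro h; exact absurd (Finset.mem_univ _) h


open scoped Classical in
lemma sumT (A lam : MulChar F ℂ) (x : F) (hx0 : x ≠ 0) :
    ∑ χ : MulChar F ℂ, binom (A * χ) χ * binom (A * χ * lam) (A * χ) * χ x
      = ((Fintype.card F : ℂ) - 1) * (A (-1) *
          ((∑ v : F, lam v * (A v * A⁻¹ (1 - (1 - x) * v))) - A⁻¹ x)) := by
  have expand : ∀ χ : MulChar F ℂ,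
      binom (A * χ) χ * binom (A * χ * lam) (A * χ) * χ x
        = ∑ u : F, ∑ v : F,
            χ (-1) * ((A * χ) u * χ⁻¹ (1 - u)) *
              ((A * χ) (-1) * ((A * χ * lam) v * (A * χ)⁻¹ (1 - v))) * χ x := by
    intro χ
    simp only [binom, Finset.mul_sum, Finset.sum_mul]
    rw [Finset.sum_comm]
  refine Eq.trans (Finset.sum_congr rfl fun χ _ => expand χ) ?_
  rw [Finset.sum_comm]
  have key : ∀ u : F, ∀ χ : MulChar F ℂ, ∀ v : F,
      χ (-1) * ((A * χ) u * χ⁻¹ (1 - u)) * ((A * χ) (-1) * ((A * χ * lam) v * (A * χ)⁻¹ (1 - v)))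
          * χ x
        = (A (-1) * (A u * (A v * (A⁻¹ (1 - v) * lam v)))) *
            χ ((-1) * ((-1) * (u * (v * (x * ((1 - u)⁻¹ * (1 - v)⁻¹)))))) := by
    intro u χ v
    simp only [MulChar.mul_apply, mul_inv, MulChar.inv_apply', map_mul]
    ring
  have key2 : ∀ u v : F, ((-1 : F) * ((-1) * (u * (v * (x * ((1 - u)⁻¹ * (1 - v)⁻¹))))))
      = u * (v * (x * ((1 - u)⁻¹ * (1 - v)⁻¹))) := by intro u v; ring
  -- currently: ∑ u ∑ χ ∑ v term; we need ∑ u ∑ v ∑ χ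
  have swap1 : ∀ u : F, (∑ χ : MulChar F ℂ, ∑ v : F,
      χ (-1) * ((A * χ) u * χ⁻¹ (1 - u)) * ((A * χ) (-1) * ((A * χ * lam) v * (A * χ)⁻¹ (1 - v)))
          * χ x)
      = ∑ v : F, (A (-1) * (A u * (A v * (A⁻¹ (1 - v) * lam v)))) *
          ∑ χ : MulChar F ℂ, χ (u * (v * (x * ((1 - u)⁻¹ * (1 - v)⁻¹)))) := by
    intro u
    rw [Finset.sum_comm]
    refine Finset.sum_congr rfl fun v _ => ?_
    rw [Finset.mul_sum]
    refine Finset.sum_congr rfl fun χ _ => ?_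
    rw [key, key2]
  refine Eq.trans (Finset.sum_congr rfl fun u _ => swap1 u) ?_
  simp only [sum_char_apply, mul_ite, mul_zero]
  rw [Finset.sum_comm]
  have inner : ∀ v : F, (∑ u : F,
      if u * (v * (x * ((1 - u)⁻¹ * (1 - v)⁻¹))) = 1
        then (A (-1) * (A u * (A v * (A⁻¹ (1 - v) * lam v)))) * ((Fintype.card F : ℂ) - 1)
        else 0)
      = ((Fintype.card F : ℂ) - 1) * (A (-1) * (lam v * (A v * A⁻¹ (1 - (1 - x) * v))))
        - (if v = 1 then ((Fintype.card F : ℂ) - 1) * (A (-1) * A⁻¹ x) else 0) := by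
    intro v
    by_cases hv1 : v = 1
    · subst hv1
      rw [if_pos rfl, Finset.sum_eq_zero, show (1:F) - (1-x)*1 = x by ring]
      · simp only [map_one, one_mul, mul_one]
        ring
      · intro u _
        rw [if_neg]
        simp
    by_cases hv0 : v = 0
    · subst hv0
      rw [if_neg hv1, Finset.sum_eq_zero]
      · simp [MulChar.map_zero]
      · intro u _
        rw [if_neg]
        simp
    rw [if_neg hv1]
    have h1v : (1 : F) - v ≠ 0 := sub_ne_zero.mpr (Ne.symm hv1)
    set d : F := 1 - (1 - x) * v with hd_def
    by_cases hd : d = 0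
    · rw [Finset.sum_eq_zero, hd, MulChar.inv_apply', inv_zero, MulChar.map_zero]
      · ring
      · intro u _
        rw [if_neg]
        intro h
        rcases eq_or_ne (1 - u) 0 with h1u | h1u
        · rw [h1u] at h; simp at h
        · have h2 : u * d = 1 - v := by
            field_simp at h
            linear_combination h
          rw [hd] at h2
          exact h1v (by linear_combination -h2)
    · rw [Finset.sum_eq_single ((1 - v) * d⁻¹)]
      · rw [if_pos, sub_zero]
        · have hA : A ((1 - v) * d⁻¹) = A (1 - v) * A⁻¹ d := by
            rw [map_mul, MulChar.inv_apply']
          have hAA : A (1 - v) * A⁻¹ (1 - v) = 1 := by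
            rw [MulChar.inv_apply', ← map_mul, mul_inv_cancel₀ h1v, map_one]
          rw [hA]
          linear_combination ((Fintype.card F : ℂ) - 1) * A (-1) * lam v * A v * A⁻¹ d * hAA
        · have h1u : (1 : F) - (1 - v) * d⁻¹ = x * v * d⁻¹ := by
            field_simp [hd_def]
            ring
          rw [h1u]
          field_simp
      · intro u _ hu
        rw [if_neg]
        intro h
        apply hu
        rcases eq_or_ne (1 - u) 0 with h1u | h1u
        · rw [h1u] at h; simp at h
        · have h2 : u * d = 1 - v := by
            field_simp at h
            linear_combination h
          field_simp [hd]
          linear_combination h2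
      · intro h; exact absurd (Finset.mem_univ _) h
  simp only [inner]
  rw [Finset.sum_sub_distrib, Finset.sum_ite_eq' Finset.univ (1 : F)
    (fun _ => ((Fintype.card F : ℂ) - 1) * (A (-1) * A⁻¹ x))]
  simp only [Finset.mem_univ, if_pos]
  simp only [← Finset.mul_sum]
  ring


lemma sumD (A B' C' : MulChar F ℂ) (x y : F) (hx1 : x ≠ 1) :
    A (-1) * ∑ v : F, (A v * A⁻¹ (1 - (1 - x) * v)) * (C'⁻¹ (v * y) * (B'⁻¹ * C') (1 - v * y))
      = A⁻¹ (1 - x) * gauss2F1 A B' C' (y / (1 - x)) := by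
  have h1x : (1 : F) - x ≠ 0 := sub_ne_zero.mpr (Ne.symm hx1)
  by_cases hy : y = 0
  · subst hy
    rw [Finset.sum_eq_zero, mul_zero, gauss2F1]
    · rw [show (0 : F) / (1 - x) = 0 by simp, MulChar.map_zero, zero_mul, zero_mul, mul_zero]
    · intro v _
      rw [mul_zero, MulChar.map_zero]
      ring
  · -- y ≠ 0
    set z : F := y / (1 - x) with hz
    have hzu : IsUnit z := IsUnit.mk0 _ (div_ne_zero hy h1x)
    have einv : Function.Involutive (fun v : F => (v * y)⁻¹) := by
      intro v
      simp only
      rw [mul_inv, inv_inv, mul_assoc, mul_inv_cancel₀ hy, mul_one]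
    calc A (-1) * ∑ v : F, (A v * A⁻¹ (1 - (1 - x) * v)) *
            (C'⁻¹ (v * y) * (B'⁻¹ * C') (1 - v * y))
        = ∑ v : F, A (-1) * ((A v * A⁻¹ (1 - (1 - x) * v)) *
            (C'⁻¹ (v * y) * (B'⁻¹ * C') (1 - v * y))) := by rw [Finset.mul_sum]
      _ = ∑ s : F, A⁻¹ (1 - x) * ((B' * C') (-1) *
            (B' s * (B'⁻¹ * C') (1 - s) * A⁻¹ (1 - z * s))) := by
          refine Fintype.sum_equiv einv.toPerm _ _ fun v => ?_
          simp only [Function.Involutive.coe_toPerm]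
          by_cases hv : v = 0
          · subst hv
            simp [MulChar.map_zero]
          · have hvy : v * y ≠ 0 := mul_ne_zero hv hy
            have hL : A (-1) * ((A v * A⁻¹ (1 - (1 - x) * v)) *
                  (C'⁻¹ (v * y) * (B'⁻¹ * C') (1 - v * y)))
                = A ((-1) * (v * (1 - (1 - x) * v)⁻¹)) *
                    (B' ((1 - v * y)⁻¹) * C' ((v * y)⁻¹ * (1 - v * y))) := by
              simp only [MulChar.mul_apply, MulChar.inv_apply', mul_inv, map_mul]
              ring
            have hR : A⁻¹ (1 - x) * ((B' * C') (-1) *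
                  (B' ((v * y)⁻¹) * (B'⁻¹ * C') (1 - (v * y)⁻¹) * A⁻¹ (1 - z * (v * y)⁻¹)))
                = A ((1 - x)⁻¹ * (1 - z * (v * y)⁻¹)⁻¹) *
                    (B' ((-1) * ((v * y)⁻¹ * (1 - (v * y)⁻¹)⁻¹)) *
                     C' ((-1) * (1 - (v * y)⁻¹))) := by
              simp only [MulChar.mul_apply, MulChar.inv_apply', mul_inv, map_mul]
              ring
            have hc : v * y * (v * y)⁻¹ = 1 := mul_inv_cancel₀ hvy
            have argA : ((-1 : F)) * (v * (1 - (1 - x) * v)⁻¹)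
                = (1 - x)⁻¹ * (1 - z * (v * y)⁻¹)⁻¹ := by
              rcases eq_or_ne ((1 : F) - (1 - x) * v) 0 with ht | ht
              · have hu : ((1 : F) - x) * v = 1 := by linear_combination -ht
                have hstep : z * (v * y)⁻¹ = ((1 - x) * v)⁻¹ * (y * y⁻¹) := by
                  rw [hz, div_eq_mul_inv, mul_inv, mul_inv]
                  ring
                have hin : (1 : F) - z * (v * y)⁻¹ = 0 := by
                  rw [hstep, hu, inv_one, one_mul, mul_inv_cancel₀ hy, sub_self]
                rw [ht, hin, inv_zero]
                ring
              · have hin : (1 : F) - z * (v * y)⁻¹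
                    = ((1 - x) * v - 1) * ((1 - x) * v)⁻¹ := by
                  rw [hz]
                  field_simp
                rw [hin, mul_inv, inv_inv,
                  show ((1 - x) * v - 1 : F) = -(1 - (1 - x) * v) by ring, inv_neg]
                have hc2 : ((1 : F) - x)⁻¹ * (1 - x) = 1 := inv_mul_cancel₀ h1x
                linear_combination (v * (1 - (1 - x) * v)⁻¹) * hc2
            have argB : ((1 : F) - v * y)⁻¹
                = (-1) * ((v * y)⁻¹ * (1 - (v * y)⁻¹)⁻¹) := by
              have e1 : (1 : F) - (v * y)⁻¹ = -((1 - v * y) * (v * y)⁻¹) := by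
                linear_combination -hc
              rw [e1, inv_neg, mul_inv (1 - v * y) ((v * y)⁻¹), inv_inv]
              linear_combination (-(1 - v * y)⁻¹) * hc
            have argC : (v * y)⁻¹ * ((1 : F) - v * y) = (-1) * (1 - (v * y)⁻¹) := by
              linear_combination -hc
            rw [hL, hR, argA, argB, argC]
      _ = A⁻¹ (1 - x) * gauss2F1 A B' C' z := by
          rw [gauss2F1, MulChar.one_apply hzu]
          simp only [← Finset.mul_sum]
          ring

end ortho

/-- a double-character-sum evaluation, `x ≠ 1`. -/
theorem double_sum_eval {F : Type*} [Field F] [Fintype F]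
    (A B' C' : MulChar F ℂ) (x y : F) (hx : x ≠ 1) :
    (∑ χ : MulChar F ℂ, ∑ lam : MulChar F ℂ,
        binom (A * χ) χ * binom (A * χ * lam) (A * χ) * binom (B' * lam) (C' * lam) *
          χ x * lam y) =
      ((Fintype.card F : ℂ) - 1) ^ 2 * (1 : MulChar F ℂ) x * A⁻¹ (1 - x) *
        gauss2F1 A B' C' (y / (1 - x)) -
      ((Fintype.card F : ℂ) - 1) ^ 2 * A⁻¹ (-x) * C'⁻¹ y * (B'⁻¹ * C') (1 - y) := by
  by_cases hx0 : x = 0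
  · subst hx0
    simp [MulChar.map_zero, MulChar.map_nonunit]
  rw [Finset.sum_comm]
  have step1 : ∀ lam : MulChar F ℂ,
      (∑ χ : MulChar F ℂ, binom (A * χ) χ * binom (A * χ * lam) (A * χ) *
          binom (B' * lam) (C' * lam) * χ x * lam y)
        = ((Fintype.card F : ℂ) - 1) * (A (-1) *
            ((∑ v : F, lam v * (A v * A⁻¹ (1 - (1 - x) * v))) - A⁻¹ x)) *
          (binom (B' * lam) (C' * lam) * lam y) := by
    intro lam
    rw [← sumT A lam x hx0, Finset.sum_mul]
    exact Finset.sum_congr rfl fun χ _ => by ring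
  refine Eq.trans (Finset.sum_congr rfl fun lam _ => step1 lam) ?_
  have step2 : ∀ lam : MulChar F ℂ,
      ((Fintype.card F : ℂ) - 1) * (A (-1) *
          ((∑ v : F, lam v * (A v * A⁻¹ (1 - (1 - x) * v))) - A⁻¹ x)) *
        (binom (B' * lam) (C' * lam) * lam y)
      = (((Fintype.card F : ℂ) - 1) * A (-1)) *
          (∑ v : F, (A v * A⁻¹ (1 - (1 - x) * v)) *
            (binom (B' * lam) (C' * lam) * lam (v * y)))
        - (((Fintype.card F : ℂ) - 1) * (A (-1) * A⁻¹ x)) *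
            (binom (B' * lam) (C' * lam) * lam y) := by
    intro lam
    have hm : ∀ v : F, (A v * A⁻¹ (1 - (1 - x) * v)) *
        (binom (B' * lam) (C' * lam) * lam (v * y))
        = (lam v * (A v * A⁻¹ (1 - (1 - x) * v))) *
            (binom (B' * lam) (C' * lam) * lam y) := by
      intro v
      rw [map_mul]
      ring
    simp only [hm]
    rw [← Finset.sum_mul]
    ring
  refine Eq.trans (Finset.sum_congr rfl fun lam _ => step2 lam) ?_
  rw [Finset.sum_sub_distrib, ← Finset.mul_sum, ← Finset.mul_sum]
  have part2 : (∑ lam : MulChar F ℂ, binom (B' * lam) (C' * lam) * lam y)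
      = ((Fintype.card F : ℂ) - 1) * (C'⁻¹ y * (B'⁻¹ * C') (1 - y)) := sumU B' C' y
  have part1 : (∑ lam : MulChar F ℂ, ∑ v : F, (A v * A⁻¹ (1 - (1 - x) * v)) *
        (binom (B' * lam) (C' * lam) * lam (v * y)))
      = ((Fintype.card F : ℂ) - 1) * ∑ v : F, (A v * A⁻¹ (1 - (1 - x) * v)) *
          (C'⁻¹ (v * y) * (B'⁻¹ * C') (1 - v * y)) := by
    rw [Finset.sum_comm, Finset.mul_sum]
    refine Finset.sum_congr rfl fun v _ => ?_
    rw [← Finset.mul_sum, sumU]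
    ring
  rw [part1, part2]
  have hD := sumD A B' C' x y hx
  have hone : (1 : MulChar F ℂ) x = 1 := MulChar.one_apply (IsUnit.mk0 x hx0)
  have hneg : A (-1) * A⁻¹ x = A⁻¹ (-x) := by
    rw [MulChar.inv_apply', MulChar.inv_apply', ← map_mul]
    congr 1
    rw [inv_neg]
    ring
  rw [hone]
  linear_combination ((Fintype.card F : ℂ) - 1) ^ 2 * hD
    - ((Fintype.card F : ℂ) - 1) ^ 2 * (C'⁻¹ y * (B'⁻¹ * C') (1 - y)) * hneg
end
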